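/- Let $\alpha \in [0,2)$, $M>0$, and let $(g_k)_{k\ge1}$ be a complex sequence with $\sum_k |g_k|^2 = 1$ and $\ell := \sum_{k=1}^\infty k^2 |g_k|^2 < \infty$. If $(b_k)$ and $(c_k)$ satisfy $|b_k|, |c_k| \le M k^\alpha$, then $\left| \sum_{k=1}^\infty \left( c_k g_k \overline{g_{k+1}} + b_k g_{k+1} \overline{g_k} \right) \right| \le 2M \, \ell^{\alpha/2}$. -/

import Mathlib

set_option maxHeartbeats 1000000

open Complex

theorem offdiag_form_bound (α M : ℝ) (hα0 : 0 ≤ α) (hα2 : α < 2) (hM : 0 < M)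
    (g b c : ℕ → ℂ)
    (hb : ∀ k : ℕ, 1 ≤ k → ‖b k‖ ≤ M * (k : ℝ) ^ α)
    (hc : ∀ k : ℕ, 1 ≤ k → ‖c k‖ ≤ M * (k : ℝ) ^ α)
    (hnorm : HasSum (fun k : ℕ => ‖g (k + 1)‖ ^ 2) 1)
    (ℓ : ℝ)
    (hℓ : HasSum (fun k : ℕ => ((k + 1 : ℕ) : ℝ) ^ 2 * ‖g (k + 1)‖ ^ 2) ℓ)
    (hsum : Summable (fun k : ℕ =>
      c (k + 1) * g (k + 1) * (starRingEnd ℂ) (g (k + 2)) +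
      b (k + 1) * g (k + 2) * (starRingEnd ℂ) (g (k + 1)))) :
    ‖∑' k : ℕ,
        (c (k + 1) * g (k + 1) * (starRingEnd ℂ) (g (k + 2)) +
         b (k + 1) * g (k + 2) * (starRingEnd ℂ) (g (k + 1)))‖
      ≤ 2 * M * ℓ ^ (α / 2) := by
  set p : ℕ → ℝ := fun k => ‖g (k + 1)‖ ^ 2 with hp_def
  have hp_nonneg : ∀ k, 0 ≤ p k := fun k => sq_nonneg _
  set A : ℕ → ℝ := fun k => ((k + 1 : ℕ) : ℝ) ^ α * p k with hA_def
  have hA_nonneg : ∀ k, 0 ≤ A k := fun k => by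
    have := hp_nonneg k
    positivity
  -- A ≤ (k+1)^2 * p
  have h1le : ∀ k : ℕ, (1 : ℝ) ≤ ((k + 1 : ℕ) : ℝ) := fun k => by
    exact_mod_cast Nat.one_le_iff_ne_zero.mpr (Nat.succ_ne_zero k)
  have hA_le : ∀ k, A k ≤ ((k + 1 : ℕ) : ℝ) ^ 2 * p k := by
    intro k
    have h2 : ((k + 1 : ℕ) : ℝ) ^ α ≤ ((k + 1 : ℕ) : ℝ) ^ (2 : ℝ) :=
      Real.rpow_le_rpow_of_exponent_le (h1le k) (le_of_lt hα2)
    have h3 : ((k + 1 : ℕ) : ℝ) ^ (2 : ℝ) = ((k + 1 : ℕ) : ℝ) ^ 2 := by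
      rw [← Real.rpow_natCast ((k+1:ℕ):ℝ) 2]; norm_num
    exact mul_le_mul_of_nonneg_right (h3 ▸ h2) (hp_nonneg k)
  have hA_summable : Summable A :=
    Summable.of_nonneg_of_le hA_nonneg hA_le hℓ.summable
  -- shifted A is summable and its sum is ≤ sum of A
  have hA'_summable : Summable (fun k => A (k + 1)) :=
    (summable_nat_add_iff 1).mpr hA_summable
  have hA'_le : ∑' k, A (k + 1) ≤ ∑' k, A k := by
    have := (hA_summable.sum_add_tsum_nat_add 1).symm
    have h0 : 0 ≤ ∑ i ∈ Finset.range 1, A i := Finset.sum_nonneg fun i _ => hA_nonneg i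
    linarith [this]
  -- pointwise bound on the terms
  set f : ℕ → ℂ := fun k =>
      c (k + 1) * g (k + 1) * (starRingEnd ℂ) (g (k + 2)) +
      b (k + 1) * g (k + 2) * (starRingEnd ℂ) (g (k + 1)) with hf_def
  have hf_bound : ∀ k, ‖f k‖ ≤ M * (A k + A (k + 1)) := by
    intro k
    have hgk := norm_nonneg (g (k + 1))
    have hgk2 := norm_nonneg (g (k + 2))
    have hck := hc (k + 1) (Nat.le_add_left 1 k)
    have hbk := hb (k + 1) (Nat.le_add_left 1 k)
    have hMa : (0:ℝ) ≤ M * ((k + 1 : ℕ) : ℝ) ^ α := by positivity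
    have htri : ‖f k‖ ≤
        ‖c (k + 1)‖ * ‖g (k + 1)‖ * ‖g (k + 2)‖ +
        ‖b (k + 1)‖ * ‖g (k + 2)‖ * ‖g (k + 1)‖ := by
      refine (norm_add_le _ _).trans ?_
      simp [map_mul, Complex.norm_conj]
    have h2 : ‖f k‖ ≤
        2 * (M * ((k + 1 : ℕ) : ℝ) ^ α) * (‖g (k + 1)‖ * ‖g (k + 2)‖) := by
      refine htri.trans ?_
      have e1 : ‖c (k + 1)‖ * ‖g (k + 1)‖ * ‖g (k + 2)‖
          ≤ (M * ((k + 1 : ℕ) : ℝ) ^ α) * (‖g (k + 1)‖ * ‖g (k + 2)‖) := by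
        rw [mul_assoc]
        exact mul_le_mul_of_nonneg_right hck (by positivity)
      have e2 : ‖b (k + 1)‖ * ‖g (k + 2)‖ * ‖g (k + 1)‖
          ≤ (M * ((k + 1 : ℕ) : ℝ) ^ α) * (‖g (k + 1)‖ * ‖g (k + 2)‖) := by
        rw [mul_assoc, mul_comm (‖g (k+2)‖)]
        exact mul_le_mul_of_nonneg_right hbk (by positivity)
      linarith
    have hamgm : ‖g (k + 1)‖ * ‖g (k + 2)‖ ≤ (p k + p (k + 1)) / 2 := by
      have := sq_nonneg (‖g (k + 1)‖ - ‖g (k + 2)‖)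
      simp only [hp_def]
      nlinarith
    have h3 : ‖f k‖ ≤ (M * ((k + 1 : ℕ) : ℝ) ^ α) * (p k + p (k + 1)) := by
      calc ‖f k‖
          ≤ 2 * (M * ((k + 1 : ℕ) : ℝ) ^ α) * (‖g (k + 1)‖ * ‖g (k + 2)‖) := h2
        _ ≤ 2 * (M * ((k + 1 : ℕ) : ℝ) ^ α) * ((p k + p (k + 1)) / 2) := by
            exact mul_le_mul_of_nonneg_left hamgm (by positivity)
        _ = (M * ((k + 1 : ℕ) : ℝ) ^ α) * (p k + p (k + 1)) := by ring
    refine h3.trans ?_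
    have hmono : ((k + 1 : ℕ) : ℝ) ^ α ≤ ((k + 2 : ℕ) : ℝ) ^ α := by
      apply Real.rpow_le_rpow (by positivity) _ hα0
      exact_mod_cast Nat.le_succ (k + 1)
    have : ((k + 1 : ℕ) : ℝ) ^ α * p (k + 1) ≤ A (k + 1) := by
      simp only [hA_def]
      exact mul_le_mul_of_nonneg_right hmono (hp_nonneg (k + 1))
    have hAk : ((k + 1 : ℕ) : ℝ) ^ α * p k = A k := rfl
    nlinarith [hp_nonneg k, hp_nonneg (k + 1), Real.rpow_nonneg (by positivity : (0:ℝ) ≤ ((k + 1 : ℕ) : ℝ)) α]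
  -- norm of tsum
  have habs_summable : Summable (fun k => ‖f k‖) := by
    apply Summable.of_nonneg_of_le (fun k => norm_nonneg _) hf_bound
    exact (hA_summable.add hA'_summable).mul_left M
  have hstep1 : ‖∑' k, f k‖ ≤ ∑' k, ‖f k‖ := by
    simpa using norm_tsum_le_tsum_norm habs_summable
  have hstep2 : ∑' k, ‖f k‖ ≤ 2 * M * ∑' k, A k := by
    calc ∑' k, ‖f k‖
        ≤ ∑' k, M * (A k + A (k + 1)) :=
          Summable.tsum_le_tsum hf_bound habs_summable ((hA_summable.add hA'_summable).mul_left M)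
      _ = M * (∑' k, A k + ∑' k, A (k + 1)) := by
          rw [tsum_mul_left, Summable.tsum_add hA_summable hA'_summable]
      _ ≤ M * (∑' k, A k + ∑' k, A k) := by
          exact mul_le_mul_of_nonneg_left (by linarith) hM.le
      _ = 2 * M * ∑' k, A k := by ring
  -- Now bound ∑ A ≤ ℓ ^ (α/2)
  have hSA : ∑' k, A k ≤ ℓ ^ (α / 2) := by
    rcases eq_or_lt_of_le hα0 with hα | hα
    · -- α = 0
      simp only [hA_def, ← hα, Real.rpow_zero, one_mul]
      rw [hnorm.tsum_eq]
      norm_num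
    · -- α > 0 : Hölder
      set P : ℝ := 2 / α with hP
      set Q : ℝ := 2 / (2 - α) with hQ
      have hpq : P.HolderConjugate Q := by
        rw [Real.holderConjugate_iff]; constructor
        · rw [hP]; rw [lt_div_iff₀ hα]; linarith
        · rw [hP, hQ]
          field_simp
          ring
      have hα2' : (0:ℝ) < 2 - α := by linarith
      set u : ℕ → ℝ := fun k => (((k + 1 : ℕ) : ℝ) ^ 2 * p k) ^ (α / 2) with hu
      set v : ℕ → ℝ := fun k => (p k) ^ ((2 - α) / 2) with hv
      have hu_nonneg : ∀ k, 0 ≤ u k := fun k => Real.rpow_nonneg (by positivity) _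
      have hv_nonneg : ∀ k, 0 ≤ v k := fun k => Real.rpow_nonneg (hp_nonneg k) _
      have hbase_nonneg : ∀ k : ℕ, (0:ℝ) ≤ ((k + 1 : ℕ) : ℝ) ^ 2 * p k := fun k => by
        have := hp_nonneg k; positivity
      have huP : ∀ k, u k ^ P = ((k + 1 : ℕ) : ℝ) ^ 2 * p k := by
        intro k
        simp only [hu]
        rw [← Real.rpow_mul (hbase_nonneg k),
          show α / 2 * P = 1 by rw [hP]; field_simp, Real.rpow_one]
      have hvQ : ∀ k, v k ^ Q = p k := by
        intro k
        rw [hv, ← Real.rpow_mul (hp_nonneg k)]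
        rw [show (2 - α) / 2 * Q = 1 by rw [hQ]; field_simp, Real.rpow_one]
      have huv : ∀ k, u k * v k = A k := by
        intro k
        simp only [hu, hv, hA_def]
        rw [Real.mul_rpow (by positivity) (hp_nonneg k), mul_assoc,
          ← Real.rpow_add' (hp_nonneg k) (by rw [show α / 2 + (2 - α) / 2 = 1 by ring]; norm_num)]
        rw [show α / 2 + (2 - α) / 2 = 1 by ring, Real.rpow_one,
          ← Real.rpow_natCast ((k+1:ℕ):ℝ) 2, ← Real.rpow_mul (by positivity)]
        push_cast
        rw [show (2:ℝ) * (α / 2) = α by ring]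
      have hu_sum : Summable (fun k => u k ^ P) := by
        simpa only [huP] using hℓ.summable
      have hv_sum : Summable (fun k => v k ^ Q) := by
        simpa only [hvQ] using hnorm.summable
      have hHolder := (Real.summable_and_inner_le_Lp_mul_Lq_tsum_of_nonneg hpq hu_nonneg hv_nonneg hu_sum hv_sum).2
      have e1 : ∑' k, u k ^ P = ℓ := by
        rw [tsum_congr huP]; exact hℓ.tsum_eq
      have e2 : ∑' k, v k ^ Q = 1 := by
        rw [tsum_congr hvQ]; exact hnorm.tsum_eq
      have e3 : ∑' k, u k * v k = ∑' k, A k := tsum_congr huv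
      rw [e1, e2, e3] at hHolder
      have e4 : 1 / P = α / 2 := by rw [hP]; field_simp
      rw [e4, Real.one_rpow, mul_one] at hHolder
      exact hHolder
  calc ‖∑' k, f k‖ ≤ ∑' k, ‖f k‖ := hstep1
    _ ≤ 2 * M * ∑' k, A k := hstep2
    _ ≤ 2 * M * ℓ ^ (α / 2) := by
        exact mul_le_mul_of_nonneg_left hSA (by positivity)
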